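/- Let q = 2^n and let α, β, γ ∈ F_q with α ≠ 0 and α(β²+1) ≠ (γ+β)(γ+1). The number of pairs (X,Y) ∈ F_q² with X ≠ γ satisfying Y² + Y = α(X+1)(X+β)/(X²+γ²) equals q if Tr_{F_q/F_2}(α) = 1, and equals q−2 if Tr_{F_q/F_2}(α) = 0. -/

import Mathlib

open Finset

private lemma fibcard {G H : Type*} [AddGroup G] [Fintype G] [AddGroup H] [Fintype H]
    [DecidableEq H] (f : G →+ H) (hf : Function.Surjective f) (t : H) :
    Fintype.card G = #{g : G | f g = t} * Fintype.card H := by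
  classical
  have h2 : ∀ h : H, h ∈ (univ : Finset H) → #{g : G | f g = h} = #{g : G | f g = t} :=
    fun h _ => AddMonoidHom.card_fiber_eq_of_mem_range f (hf h) (hf t)
  calc Fintype.card G = ∑ h : H, #{g : G | f g = h} := by
        rw [← Finset.card_univ]
        exact Finset.card_eq_sum_card_fiberwise (fun x _ => mem_univ _)
    _ = ∑ _h : H, #{g : G | f g = t} := Finset.sum_congr rfl h2
    _ = #{g : G | f g = t} * Fintype.card H := by
        rw [Finset.sum_const, Finset.card_univ, smul_eq_mul, mul_comm]

theorem stmt11 (n q : ℕ) (hn : 0 < n) (hq : q = 2 ^ n)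
    (F : Type*) [Field F] [Fintype F] [Algebra (ZMod 2) F] (hF : Fintype.card F = q)
    (α β γ : F) (hα : α ≠ 0) (h2 : α * (β ^ 2 + 1) ≠ (γ + β) * (γ + 1)) :
    Nat.card {x : F × F | x.1 ≠ γ ∧
      x.2 ^ 2 + x.2 = α * (x.1 + 1) * (x.1 + β) / (x.1 ^ 2 + γ ^ 2)} =
      if Algebra.trace (ZMod 2) F α = 1 then q else q - 2 := by
  classical
  haveI hchar : CharP F 2 := charP_of_injective_algebraMap (algebraMap (ZMod 2) F).injective 2
  have htwo : (2 : F) = 0 := by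
    have := hchar.cast_eq_zero
    exact_mod_cast this
  set Tr := Algebra.trace (ZMod 2) F with hTr
  -- trace is invariant under squaring
  have tr_sq : ∀ x : F, Tr (x ^ 2) = Tr x := by
    intro x
    let e : F ≃ₐ[ZMod 2] F := AlgEquiv.ofRingEquiv (f := frobeniusEquiv F 2)
      (fun z => by
        rw [frobeniusEquiv_def, ← map_pow]
        congr 1
        revert z; decide)
    have := Algebra.trace_eq_of_algEquiv e x
    rwa [show e x = x ^ 2 from rfl] at this
  have trsurj : Function.Surjective Tr := Algebra.trace_surjective _ _
  -- the Artin-Schreier map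
  let φ : F →+ F := AddMonoidHom.mk' (fun y => y ^ 2 + y)
    (fun a b => by linear_combination (a * b) * htwo)
  have φ_apply : ∀ y, φ y = y ^ 2 + y := fun _ => rfl
  -- kernel fiber has two elements
  have hker : #{y : F | φ y = (0 : F)} = 2 := by
    have hset : (univ.filter (fun y : F => φ y = 0)) = ({0, 1} : Finset F) := by
      ext y
      simp only [Finset.mem_filter, Finset.mem_univ, true_and, Finset.mem_insert,
        Finset.mem_singleton, φ_apply]
      constructor
      · intro h
        have hy : y * (y + 1) = 0 := by linear_combination h
        rcases mul_eq_zero.1 hy with h' | h'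
        · exact Or.inl h'
        · exact Or.inr (by linear_combination h' - htwo)
      · rintro (rfl | rfl)
        · norm_num
        · linear_combination htwo
    rw [hset, Finset.card_insert_of_notMem (by simp), Finset.card_singleton]
  have hfib2 : ∀ c : F, c ∈ Set.range φ → #{y : F | φ y = c} = 2 := by
    intro c hc
    rw [AddMonoidHom.card_fiber_eq_of_mem_range φ hc ⟨0, map_zero φ⟩, hker]
  -- the range of φ is exactly the kernel of the trace
  have T0card : q = #{c : F | Tr c = 0} * 2 := by
    have := fibcard (LinearMap.toAddMonoidHom Tr) trsurj 0
    simp [hF, ZMod.card, LinearMap.toAddMonoidHom_coe] at this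
    convert this using 3
    ext; simp
    exact ⟨fun h => Finset.mem_filter.2 ⟨Finset.mem_univ _, h⟩, fun h => (Finset.mem_filter.1 h).2⟩
  have hRT : (univ.image φ : Finset F) = univ.filter (fun c : F => Tr c = 0) := by
    have hsub : (univ.image φ : Finset F) ⊆ univ.filter (fun c : F => Tr c = 0) := by
      intro c hc
      obtain ⟨y, _, rfl⟩ := Finset.mem_image.1 hc
      simp only [mem_filter, mem_univ, true_and, φ_apply, map_add, tr_sq]
      exact CharTwo.add_self_eq_zero _
    refine Finset.eq_of_subset_of_card_le hsub ?_
    have hq2 : (univ.image φ : Finset F).card * 2 = q := by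
      have h1 : Fintype.card F = ∑ c ∈ univ.image φ, #{y : F | φ y = c} := by
        rw [← Finset.card_univ]
        exact Finset.card_eq_sum_card_fiberwise
          (fun x _ => Finset.mem_image_of_mem φ (mem_univ x))
      rw [Finset.sum_congr rfl (fun c hc => hfib2 c (by
        obtain ⟨y, _, rfl⟩ := Finset.mem_image.1 hc; exact ⟨y, rfl⟩))] at h1
      rw [Finset.sum_const, smul_eq_mul] at h1
      omega
    omega
  -- Artin-Schreier counting
  have AScount : ∀ c : F, #{y : F | y ^ 2 + y = c} = if Tr c = 0 then 2 else 0 := by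
    intro c
    split_ifs with h
    · have : #{y : F | φ y = c} = 2 := by
        apply hfib2
        have : c ∈ (univ.image φ : Finset F) := by rw [hRT]; simp [h]
        obtain ⟨y, _, rfl⟩ := Finset.mem_image.1 this; exact ⟨y, rfl⟩
      simpa [φ_apply] using this
    · rw [Finset.card_eq_zero, Finset.eq_empty_iff_forall_notMem]
      intro y hy
      simp only [mem_filter, mem_univ, true_and] at hy
      apply h
      have hmem : (y ^ 2 + y) ∈ (univ.image φ : Finset F) :=
        Finset.mem_image_of_mem φ (mem_univ y)
      rw [hRT, mem_filter] at hmem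
      rw [← hy]; exact hmem.2
  -- set up the constant c
  obtain ⟨s, hs⟩ := (frobeniusEquiv F 2).surjective (α * (γ + 1) * (γ + β))
  rw [frobeniusEquiv_def] at hs
  set c : F := α * (β + 1) + s with hc
  have hcne : c ≠ 0 := by
    intro h0
    have hsval : s = α * (β + 1) := by linear_combination h0 - (α * (β + 1)) * htwo
    apply h2
    have hαα : α * α * (β + 1) ^ 2 = α * (γ + 1) * (γ + β) := by
      rw [← hs, hsval]; ring
    have hcancel : α * (β + 1) ^ 2 = (γ + 1) * (γ + β) :=
      mul_left_cancel₀ hα (by linear_combination hαα)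
    calc α * (β ^ 2 + 1) = α * (β + 1) ^ 2 := by linear_combination (-(α * β)) * htwo
      _ = (γ + β) * (γ + 1) := by rw [hcancel]; ring
  -- trace of the RHS
  have key : ∀ x : F, x ≠ γ →
      Tr (α * (x + 1) * (x + β) / (x ^ 2 + γ ^ 2)) = Tr α + Tr (c * (x + γ)⁻¹) := by
    intro x hx
    have hxg : x + γ ≠ 0 := by
      intro h; apply hx; linear_combination h - γ * htwo
    have hsq : x ^ 2 + γ ^ 2 = (x + γ) ^ 2 := by linear_combination (-(x * γ)) * htwo
    have hnum : α * (x + 1) * (x + β)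
        = α * (x + γ) ^ 2 + (α * (β + 1)) * (x + γ) + s ^ 2 := by
      rw [hs]
      linear_combination (-(α * (x * γ + γ ^ 2 + β * γ + γ))) * htwo
    have hdecomp : α * (x + 1) * (x + β) / (x ^ 2 + γ ^ 2)
        = α + (α * (β + 1)) * (x + γ)⁻¹ + (s * (x + γ)⁻¹) ^ 2 := by
      rw [hsq, hnum]
      field_simp
    rw [hdecomp, map_add, map_add, tr_sq]
    have hadd : Tr (α * (β + 1) * (x + γ)⁻¹) + Tr (s * (x + γ)⁻¹) = Tr (c * (x + γ)⁻¹) := by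
      rw [← map_add]; congr 1; rw [hc]; ring
    rw [add_assoc, hadd]
  -- count as a sum over x
  have hcount : Nat.card {x : F × F | x.1 ≠ γ ∧
      x.2 ^ 2 + x.2 = α * (x.1 + 1) * (x.1 + β) / (x.1 ^ 2 + γ ^ 2)} =
      ∑ x : F, #{y : F | x ≠ γ ∧ y ^ 2 + y = α * (x + 1) * (x + β) / (x ^ 2 + γ ^ 2)} := by
    have e1 : {x : F × F | x.1 ≠ γ ∧
        x.2 ^ 2 + x.2 = α * (x.1 + 1) * (x.1 + β) / (x.1 ^ 2 + γ ^ 2)} ≃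
        Σ x : F, {y : F // x ≠ γ ∧ y ^ 2 + y = α * (x + 1) * (x + β) / (x ^ 2 + γ ^ 2)} :=
      Equiv.subtypeProdEquivSigmaSubtype (α := F) (β := F)
        (fun a b => a ≠ γ ∧ b ^ 2 + b = α * (a + 1) * (a + β) / (a ^ 2 + γ ^ 2))
    rw [Nat.card_congr e1, Nat.card_eq_fintype_card, Fintype.card_sigma]
    exact Finset.sum_congr rfl (fun x _ => Fintype.card_subtype _)
  rw [hcount]
  have hiff : ∀ a b : ZMod 2, (a + b = 0) ↔ (b = a) := by decide
  have hterm : ∀ x : F,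
      #{y : F | x ≠ γ ∧ y ^ 2 + y = α * (x + 1) * (x + β) / (x ^ 2 + γ ^ 2)} =
      if x ≠ γ ∧ Tr (c * (x + γ)⁻¹) = Tr α then 2 else 0 := by
    intro x
    by_cases hx : x = γ
    · simp [hx]
    · have h1 : ∀ y : F, (x ≠ γ ∧ y ^ 2 + y = α * (x + 1) * (x + β) / (x ^ 2 + γ ^ 2)) ↔
          y ^ 2 + y = α * (x + 1) * (x + β) / (x ^ 2 + γ ^ 2) := fun y => by tauto
      simp only [h1]
      rw [AScount, key x hx]
      simp only [hiff]
      simp [hx]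
  simp only [hterm]
  -- now transform the sum into a count over v ≠ 0
  have hsum : ∑ x : F, (if x ≠ γ ∧ Tr (c * (x + γ)⁻¹) = Tr α then 2 else 0) =
      2 * #{v : F | v ≠ 0 ∧ Tr v = Tr α} := by
    rw [← Finset.sum_filter, Finset.sum_const, smul_eq_mul, mul_comm]
    congr 1
    apply Finset.card_nbij' (fun x => c * (x + γ)⁻¹) (fun v => γ + c * v⁻¹)
    · intro x hx
      simp only [mem_coe, mem_filter, mem_univ, true_and] at hx ⊢
      have hxg : x + γ ≠ 0 := by
        intro h; apply hx.1; linear_combination h - γ * htwo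
      exact ⟨mul_ne_zero hcne (inv_ne_zero hxg), hx.2⟩
    · intro v hv
      simp only [mem_coe, mem_filter, mem_univ, true_and] at hv ⊢
      obtain ⟨hv0, hvt⟩ := hv
      have h1 : γ + c * v⁻¹ ≠ γ := by
        intro h
        have h5 : c * v⁻¹ = 0 := by linear_combination h
        exact hcne (by
          rcases mul_eq_zero.1 h5 with h | h
          · exact h
          · exact absurd (inv_eq_zero.1 h) hv0)
      refine ⟨h1, ?_⟩
      have h3 : γ + c * v⁻¹ + γ = c * v⁻¹ := by linear_combination γ * htwo
      rw [h3, mul_inv, inv_inv]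
      have h6 : c * (c⁻¹ * v) = v := by field_simp
      rw [h6, hvt]
    · intro x hx
      simp only [mem_coe, mem_filter, mem_univ, true_and] at hx
      have hxg : x + γ ≠ 0 := by
        intro h; apply hx.1; linear_combination h - γ * htwo
      have h7 : c * (c * (x + γ)⁻¹)⁻¹ = x + γ := by
        rw [mul_inv, inv_inv]
        field_simp
      dsimp only
      rw [h7]
      linear_combination γ * htwo
    · intro v hv
      simp only [mem_coe, mem_filter, mem_univ, true_and] at hv
      have h3 : γ + c * v⁻¹ + γ = c * v⁻¹ := by linear_combination γ * htwo
      dsimp only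
      rw [h3, mul_inv, inv_inv]
      field_simp
  rw [hsum]
  -- final count
  have hfin : q = #{v : F | Tr v = Tr α} * 2 := by
    have := fibcard (LinearMap.toAddMonoidHom Tr) trsurj (Tr α)
    simp [hF, ZMod.card, LinearMap.toAddMonoidHom_coe] at this
    convert this using 3
    ext; simp
    exact ⟨fun h => Finset.mem_filter.2 ⟨Finset.mem_univ _, h⟩, fun h => (Finset.mem_filter.1 h).2⟩
  have hsplit : ∀ t : ZMod 2, t = 0 ∨ t = 1 := by decide
  have hqpos : 2 ≤ q := by
    rw [hq]
    calc 2 = 2 ^ 1 := rfl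
    _ ≤ 2 ^ n := Nat.pow_le_pow_right (by norm_num) hn
  rcases hsplit (Tr α) with h | h
  · have h0mem : (0 : F) ∈ univ.filter (fun v : F => Tr v = Tr α) := by
      simp [h]
    have hset : (univ.filter (fun v : F => v ≠ 0 ∧ Tr v = Tr α)) =
        (univ.filter (fun v : F => Tr v = Tr α)).erase 0 := by
      ext v; simp [Finset.mem_erase, and_comm]
    rw [hset, Finset.card_erase_of_mem h0mem, if_neg (by rw [h]; decide)]
    omega
  · have hset : ({v : F | v ≠ 0 ∧ Tr v = Tr α} : Finset F) =
        ({v : F | Tr v = Tr α} : Finset F) := by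
      ext v
      simp only [mem_filter, mem_univ, true_and, and_iff_right_iff_imp]
      intro hv h0
      rw [h0, map_zero, h] at hv
      exact absurd hv (by decide)
    rw [hset, if_pos h]
    omega
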